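/- Let β ∈ (0, 1/2), ν ∈ ℝ, and ε ∈ {1, −1}. Then Im( i·2^{2β}·Γ(β + iν)·e^{εiπβ}·Γ(−2β) / (Γ(2β)·Γ(1 − β + iν)) ) = − 2^{2β−1}·|Γ(β + iν)|²·e^{επν} / (2β·Γ(2β)²), where Γ denotes the complex Gamma function. -/

import Mathlib

open Complex Real

set_option maxHeartbeats 1000000 in
/-- For `β ∈ (0, 1/2)`, `ν ∈ ℝ` and `ε = ±1`,
`Im( i·2^{2β}·Γ(β+iν)·e^{εiπβ}·Γ(−2β) / (Γ(2β)·Γ(1−β+iν)) )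
  = − 2^{2β−1}·|Γ(β+iν)|²·e^{επν} / (2β·Γ(2β)²)`. -/
theorem gamma_imaginary_part_identity (β ν ε : ℝ)
    (hβ : β ∈ Set.Ioo (0 : ℝ) (1 / 2)) (hε : ε = 1 ∨ ε = -1) :
    (I * (2 : ℂ) ^ (((2 * β : ℝ)) : ℂ) * Complex.Gamma ((β : ℂ) + I * (ν : ℂ)) *
        Complex.exp ((ε : ℂ) * (π : ℂ) * (β : ℂ) * I) * Complex.Gamma (-((2 * β : ℝ) : ℂ)) /
        (Complex.Gamma (((2 * β : ℝ)) : ℂ) *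
          Complex.Gamma (1 - (β : ℂ) + I * (ν : ℂ)))).im =
      -((2 : ℝ) ^ (2 * β - 1) * ‖Complex.Gamma ((β : ℂ) + I * (ν : ℂ))‖ ^ 2 *
          Real.exp (ε * π * ν)) /
        (2 * β * Real.Gamma (2 * β) ^ 2) := by
  obtain ⟨hβ0, hβ2⟩ := hβ
  have hpi := Real.pi_pos
  have h2β0 : (0:ℝ) < 2 * β := by linarith
  have h2β1 : 2 * β < 1 := by linarith
  have hsin2 : 0 < Real.sin (π * (2 * β)) :=
    Real.sin_pos_of_pos_of_lt_pi (by positivity) (by nlinarith)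
  have hΓr : 0 < Real.Gamma (2 * β) := Real.Gamma_pos_of_pos h2β0
  set A := Complex.Gamma ((β : ℂ) + I * (ν : ℂ)) with hA_def
  have hA : A ≠ 0 := by
    apply Complex.Gamma_ne_zero_of_re_pos
    simpa using hβ0
  have hB : Complex.Gamma ((β : ℂ) - I * (ν : ℂ)) ≠ 0 := by
    apply Complex.Gamma_ne_zero_of_re_pos
    simpa using hβ0
  have hG1 : Complex.Gamma (1 - (β : ℂ) + I * (ν : ℂ)) ≠ 0 := by
    apply Complex.Gamma_ne_zero_of_re_pos
    simp
    linarith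
  have hconj : Complex.Gamma ((β : ℂ) - I * (ν : ℂ)) = (starRingEnd ℂ) A := by
    rw [hA_def, ← Complex.Gamma_conj]
    congr 1
    simp [Complex.ext_iff]
  -- reflection at -2β
  have hsneg : ((Real.sin (-(π * (2 * β))) : ℝ) : ℂ) ≠ 0 := by
    rw [Complex.ofReal_ne_zero, Real.sin_neg]
    exact neg_ne_zero.mpr hsin2.ne'
  have h1 := Complex.Gamma_mul_Gamma_one_sub (-((2 * β : ℝ) : ℂ))
  have e1 : (1 : ℂ) - -((2 * β : ℝ) : ℂ) = ((2 * β : ℝ) : ℂ) + 1 := by push_cast; ring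
  have e2 : (↑π * -((2 * β : ℝ) : ℂ)) = ((-(π * (2 * β)) : ℝ) : ℂ) := by push_cast; ring
  rw [e1, e2, Complex.Gamma_add_one _ (by
      simpa using h2β0.ne'), Complex.Gamma_ofReal, ← Complex.ofReal_sin,
      eq_div_iff hsneg] at h1
  -- reflection at β - Iν
  have h2 := Complex.Gamma_mul_Gamma_one_sub ((β : ℂ) - I * (ν : ℂ))
  have e3 : (1 : ℂ) - ((β : ℂ) - I * (ν : ℂ)) = 1 - (β : ℂ) + I * (ν : ℂ) := by ring
  have e4 : (↑π * ((β : ℂ) - I * (ν : ℂ))) = ((π * β : ℝ) : ℂ) - ((π * ν : ℝ) : ℂ) * I := by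
    push_cast; ring
  rw [e3, e4] at h2
  set s : ℂ := Complex.sin (((π * β : ℝ) : ℂ) - ((π * ν : ℝ) : ℂ) * I) with hs_def
  have hsne : s ≠ 0 := by
    intro h
    rw [h, div_zero] at h2
    exact mul_ne_zero hB hG1 h2
  rw [eq_div_iff hsne] at h2
  have hπ : ((π : ℝ) : ℂ) ≠ 0 := by exact_mod_cast hpi.ne'
  have hΓneg : Complex.Gamma (-((2 * β : ℝ) : ℂ)) =
      ↑π / (↑(Real.sin (-(π * (2 * β)))) * (((2 * β : ℝ) : ℂ) * ↑(Real.Gamma (2 * β)))) := by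
    rw [eq_div_iff (mul_ne_zero hsneg
      (mul_ne_zero (by exact_mod_cast h2β0.ne') (by exact_mod_cast hΓr.ne')))]
    linear_combination h1
  have hG1' : Complex.Gamma (1 - (β : ℂ) + I * (ν : ℂ)) =
      ↑π / (s * Complex.Gamma ((β : ℂ) - I * (ν : ℂ))) := by
    rw [eq_div_iff (mul_ne_zero hsne hB)]
    linear_combination h2
  have hexp : ((ε : ℂ) * (π : ℂ) * (β : ℂ) * I) = ((ε * π * β : ℝ) : ℂ) * I := by
    push_cast; ring
  have hcpow : ((2 : ℂ) ^ (((2 * β : ℝ)) : ℂ)) = ((((2:ℝ) ^ (2*β) : ℝ)) : ℂ) :=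
    (Complex.ofReal_cpow (by norm_num) _).symm
  have habs : ((‖A‖ ^ 2 : ℝ) : ℂ) = A * (starRingEnd ℂ) A := by
    rw [Complex.sq_norm]
    exact_mod_cast (Complex.mul_conj A).symm
  -- main complex identity
  have hE : I * (2 : ℂ) ^ (((2 * β : ℝ)) : ℂ) * A *
        Complex.exp ((ε : ℂ) * (π : ℂ) * (β : ℂ) * I) * Complex.Gamma (-((2 * β : ℝ) : ℂ)) /
        (Complex.Gamma (((2 * β : ℝ)) : ℂ) *
          Complex.Gamma (1 - (β : ℂ) + I * (ν : ℂ))) =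
      ((((2:ℝ) ^ (2*β) * ‖A‖ ^ 2 /
          (Real.sin (π * (2*β)) * (2 * β) * Real.Gamma (2*β) ^ 2)) : ℝ) : ℂ) *
        (-I * Complex.exp (((ε * π * β : ℝ) : ℂ) * I) * s) := by
    rw [hΓneg, hG1', hconj, Complex.Gamma_ofReal, hexp, hcpow, Real.sin_neg]
    push_cast [habs]
    have hΓc : ((Real.Gamma (2*β) : ℝ) : ℂ) ≠ 0 := by exact_mod_cast hΓr.ne'
    have h2βc : ((β : ℂ)) ≠ 0 := by exact_mod_cast hβ0.ne'
    have hsin2c : (Complex.sin (((π * (2*β) : ℝ)) : ℂ)) ≠ 0 := by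
      rw [← Complex.ofReal_sin, Complex.ofReal_ne_zero]; exact hsin2.ne'
    field_simp [hπ, hΓc, h2βc, hsin2c, hsne, hA]
  rw [hE, hs_def, Complex.sin_sub, Complex.sin_mul_I, Complex.cos_mul_I, Complex.exp_mul_I]
  simp only [← Complex.ofReal_sin, ← Complex.ofReal_cos, ← Complex.ofReal_sinh,
    ← Complex.ofReal_cosh]
  simp only [Complex.mul_im, Complex.mul_re, Complex.add_im, Complex.add_re, Complex.sub_im,
    Complex.sub_re, Complex.neg_im, Complex.neg_re, Complex.I_re, Complex.I_im,
    Complex.ofReal_re, Complex.ofReal_im]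
  ring_nf
  have hsb : 0 < Real.sin (β * π) := by
    rw [mul_comm]; exact Real.sin_pos_of_pos_of_lt_pi (by positivity) (by nlinarith)
  have hcb : 0 < Real.cos (β * π) := by
    rw [mul_comm]
    apply Real.cos_pos_of_mem_Ioo
    constructor <;> nlinarith
  have hsin2' : Real.sin (β * π * 2) = 2 * Real.sin (β * π) * Real.cos (β * π) := by
    rw [show β * π * 2 = 2 * (β * π) by ring, Real.sin_two_mul]
  have hrp : (2:ℝ) ^ (-1 + β * 2) = (2:ℝ) ^ (β * 2) * 2⁻¹ := by
    rw [show (-1 + β * 2 : ℝ) = β * 2 + (-1) by ring, Real.rpow_add two_pos,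
      Real.rpow_neg_one]
  rw [hsin2', hrp, Real.cosh_eq, Real.sinh_eq]
  have hβ' : β ≠ 0 := hβ0.ne'
  have hΓ' : Real.Gamma (β * 2) ≠ 0 := by rw [mul_comm]; exact hΓr.ne'
  rcases hε with rfl | rfl
  · simp only [mul_one, one_mul]
    field_simp [hsb.ne', hcb.ne', hβ', hΓ']
    ring
  · rw [show β * π * (-1:ℝ) = -(β * π) by ring, Real.cos_neg, Real.sin_neg,
      show π * (-1:ℝ) * ν = -(π * ν) by ring]
    field_simp [hsb.ne', hcb.ne', hβ', hΓ']
    ring
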